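/- Let n_x, n_y be coprime positive integers. Then the set of pairs (t₁, t₂) with 0 ≤ t₁ < t₂ ≤ π, cos(n_x t₁) = cos(n_x t₂), and cos(n_y t₁) = cos(n_y t₂) is finite and has exactly (n_x − 1)(n_y − 1)/2 elements. -/

import Mathlib

open Real

set_option maxHeartbeats 1000000


lemma both_aux (nx ny : ℕ) (hnx : 0 < nx) (hny : 0 < ny) (hcop : Nat.Coprime nx ny)
    (s : ℝ) (hs0 : 0 < s) (hs2 : s < 2 * π)
    (k m : ℤ) (hk : (nx:ℝ) * s = 2 * k * π) (hm : (ny:ℝ) * s = 2 * m * π) : False := by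
  have hpi := Real.pi_pos
  have hxpos : (0:ℝ) < nx := Nat.cast_pos.mpr hnx
  have hypos : (0:ℝ) < ny := Nat.cast_pos.mpr hny
  have hkpos : (0:ℝ) < k := by nlinarith
  have hmpos : (0:ℝ) < m := by nlinarith
  have hk1 : (1:ℤ) ≤ k := by exact_mod_cast hkpos
  have hm1 : (1:ℤ) ≤ m := by exact_mod_cast hmpos
  have hklt : (k:ℤ) < nx := by
    have : (k:ℝ) < nx := by nlinarith
    exact_mod_cast this
  have heq : (k:ℝ) * ny = m * nx := by nlinarith [hk, hm]
  have heqz : k.toNat * ny = m.toNat * nx := by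
    have hka : ((k.toNat : ℕ) : ℝ) = (k:ℝ) := by
      exact_mod_cast Int.toNat_of_nonneg (by omega : (0:ℤ) ≤ k)
    have hmb : ((m.toNat : ℕ) : ℝ) = (m:ℝ) := by
      exact_mod_cast Int.toNat_of_nonneg (by omega : (0:ℤ) ≤ m)
    have : ((k.toNat * ny : ℕ) : ℝ) = ((m.toNat * nx : ℕ) : ℝ) := by
      push_cast; rw [hka, hmb]; linarith
    exact_mod_cast this
  have hdvd : nx ∣ k.toNat * ny := ⟨m.toNat, by rw [heqz, Nat.mul_comm]⟩
  have := Nat.le_of_dvd (by omega) (Nat.Coprime.dvd_of_dvd_mul_right hcop hdvd)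
  omega

lemma ne_aux (nx ny : ℕ) (hcop : Nat.Coprime nx ny) (a b : ℕ)
    (ha1 : 1 ≤ a) (ha2 : a < nx) :
    a * ny + b * nx ≠ nx * ny := by
  intro heq
  have hdvd : (nx:ℤ) ∣ (a:ℤ) * ny := ⟨(ny:ℤ) - b, by
    have : (a:ℤ) * ny + b * nx = nx * ny := by exact_mod_cast heq
    linarith⟩
  have hdvd2 : nx ∣ a * ny := by exact_mod_cast hdvd
  have : nx ∣ a := Nat.Coprime.dvd_of_dvd_mul_right hcop hdvd2
  have := Nat.le_of_dvd (by omega) this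
  omega

lemma cos_pi_aux (a : ℕ) (c : ℝ) : Real.cos (a * π - c) = Real.cos (a * π + c) := by
  rw [Real.cos_sub, Real.cos_add, Real.sin_nat_mul_pi]
  ring




lemma case_aux (nx ny : ℕ) (hnx : 0 < nx) (hny : 0 < ny) (hcop : Nat.Coprime nx ny)
    (t₁ t₂ : ℝ) (ht0 : 0 ≤ t₁) (ht12 : t₁ < t₂) (ht2 : t₂ ≤ π)
    (k m : ℤ) (hk : (nx:ℝ) * (t₂ - t₁) = 2 * k * π) (hm : (ny:ℝ) * (t₂ + t₁) = 2 * m * π) :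
    ∃ a b : ℕ, 1 ≤ a ∧ a < nx ∧ 1 ≤ b ∧ b < ny ∧ a * ny + b * nx < nx * ny ∧
      (a:ℝ)/nx ≤ (b:ℝ)/ny ∧
      t₁ = π * ((b:ℝ)/ny - (a:ℝ)/nx) ∧ t₂ = π * ((a:ℝ)/nx + (b:ℝ)/ny) := by
  have hpi := Real.pi_pos
  have hxne : (nx:ℝ) ≠ 0 := Nat.cast_ne_zero.mpr hnx.ne'
  have hyne : (ny:ℝ) ≠ 0 := Nat.cast_ne_zero.mpr hny.ne'
  have hxpos : (0:ℝ) < nx := Nat.cast_pos.mpr hnx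
  have hypos : (0:ℝ) < ny := Nat.cast_pos.mpr hny
  have hkpos : (0:ℝ) < k := by nlinarith
  have hmpos : (0:ℝ) < m := by nlinarith
  have hk1 : (1:ℤ) ≤ k := by exact_mod_cast hkpos
  have hm1 : (1:ℤ) ≤ m := by exact_mod_cast hmpos
  have hka : ((k.toNat : ℕ) : ℝ) = (k:ℝ) := by
    exact_mod_cast Int.toNat_of_nonneg (by omega : (0:ℤ) ≤ k)
  have hmb : ((m.toNat : ℕ) : ℝ) = (m:ℝ) := by
    exact_mod_cast Int.toNat_of_nonneg (by omega : (0:ℤ) ≤ m)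
  have hXc : (k:ℝ)/nx * nx = k := div_mul_cancel₀ _ hxne
  have hYc : (m:ℝ)/ny * ny = m := div_mul_cancel₀ _ hyne
  have e1 : t₂ - t₁ = 2*π*((k:ℝ)/nx) := by field_simp; linear_combination hk
  have e2 : t₂ + t₁ = 2*π*((m:ℝ)/ny) := by field_simp; linear_combination hm
  have et2 : t₂ = π*((k:ℝ)/nx + (m:ℝ)/ny) := by
    have h1 : 2*t₂ = 2*π*((k:ℝ)/nx) + 2*π*((m:ℝ)/ny) := by linarith
    nlinarith [h1]
  have et1 : t₁ = π*((m:ℝ)/ny - (k:ℝ)/nx) := by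
    have h1 : 2*t₁ = 2*π*((m:ℝ)/ny) - 2*π*((k:ℝ)/nx) := by linarith
    nlinarith [h1]
  have h2k : 2*(k:ℤ) ≤ nx := by
    have hr : 2*π*((k:ℝ)/nx) ≤ π := by linarith
    have : 2*(k:ℝ) ≤ nx := by
      nlinarith [mul_le_mul_of_nonneg_right hr hxpos.le, hXc, hpi]
    exact_mod_cast this
  have hklt : (k:ℤ) < nx := by omega
  have hmlt : (m:ℤ) < ny := by
    have hr : 2*π*((m:ℝ)/ny) < 2*π := by linarith
    have : (m:ℝ) < ny := by
      nlinarith [mul_lt_mul_of_pos_right hr hypos, hYc, hpi]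
    exact_mod_cast this
  have hsum : (k:ℝ)*ny + nx*m ≤ nx*ny := by
    have h1 : (k:ℝ)/nx + (m:ℝ)/ny ≤ 1 := by nlinarith [et2, ht2]
    rw [div_add_div _ _ hxne hyne, div_le_one (by positivity)] at h1
    linarith
  have hsumn : k.toNat * ny + m.toNat * nx ≤ nx * ny := by
    have : ((k.toNat * ny + m.toNat * nx : ℕ) : ℝ) ≤ ((nx*ny : ℕ) : ℝ) := by
      push_cast
      rw [hka, hmb]
      linarith
    exact_mod_cast this
  have hlt := ne_aux nx ny hcop k.toNat m.toNat (by omega) (by omega)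
  refine ⟨k.toNat, m.toNat, by omega, by omega, by omega, by omega, by omega, ?_, ?_, ?_⟩
  · rw [hka, hmb, div_le_div_iff₀ hxpos hypos]
    have : 0 ≤ (m:ℝ)/ny - (k:ℝ)/nx := by nlinarith [et1, ht0, hpi]
    rw [sub_nonneg, div_le_div_iff₀ hxpos hypos] at this
    linarith
  · rw [hka, hmb]; exact et1
  · rw [hka, hmb]; exact et2

lemma count_lemma (nx ny : ℕ) (hnx : 0 < nx) (hny : 0 < ny) (hcop : Nat.Coprime nx ny) :
    2 * ((Finset.Ico 1 nx ×ˢ Finset.Ico 1 ny).filter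
      (fun p => p.1 * ny + p.2 * nx < nx * ny)).card = (nx - 1) * (ny - 1) := by
  classical
  set G := Finset.Ico 1 nx ×ˢ Finset.Ico 1 ny with hG
  have hne : ∀ p ∈ G, p.1 * ny + p.2 * nx ≠ nx * ny := by
    rintro ⟨a, b⟩ hp heq
    simp only [hG, Finset.mem_product, Finset.mem_Ico] at hp
    simp only at heq
    have hdvd : (nx:ℤ) ∣ (a:ℤ) * ny := ⟨(ny:ℤ) - b, by push_cast at heq ⊢; linarith⟩
    have hdvd2 : nx ∣ a * ny := by exact_mod_cast hdvd
    have : nx ∣ a := Nat.Coprime.dvd_of_dvd_mul_right hcop hdvd2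
    have := Nat.le_of_dvd (by omega) this
    omega
  have hsplit : G.filter (fun p => ¬ p.1 * ny + p.2 * nx < nx * ny)
      = G.filter (fun p => nx * ny < p.1 * ny + p.2 * nx) := by
    apply Finset.filter_congr
    rintro ⟨a,b⟩ hp
    have h := hne (a,b) hp
    simp only at h ⊢
    omega
  have hcardeq : (G.filter (fun p => p.1 * ny + p.2 * nx < nx * ny)).card
      = (G.filter (fun p => nx * ny < p.1 * ny + p.2 * nx)).card := by
    apply Finset.card_bij' (fun p _ => (nx - p.1, ny - p.2)) (fun p _ => (nx - p.1, ny - p.2))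
    · rintro ⟨a,b⟩ hp
      simp only [Finset.mem_filter, hG, Finset.mem_product, Finset.mem_Ico] at hp ⊢
      obtain ⟨⟨⟨ha1,ha2⟩,⟨hb1,hb2⟩⟩, hlt⟩ := hp
      refine ⟨⟨⟨by omega, by omega⟩, ⟨by omega, by omega⟩⟩, ?_⟩
      have h1 : (nx - a) * ny = nx*ny - a*ny := by rw [Nat.sub_mul]
      have h2 : (ny - b) * nx = ny*nx - b*nx := by rw [Nat.sub_mul]
      have h3 : ny*nx = nx*ny := Nat.mul_comm _ _
      have ha : a*ny ≤ nx*ny := Nat.mul_le_mul_right _ (le_of_lt ha2)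
      have hb : b*nx ≤ ny*nx := Nat.mul_le_mul_right _ (le_of_lt hb2)
      omega
    · rintro ⟨a,b⟩ hp
      simp only [Finset.mem_filter, hG, Finset.mem_product, Finset.mem_Ico] at hp ⊢
      obtain ⟨⟨⟨ha1,ha2⟩,⟨hb1,hb2⟩⟩, hlt⟩ := hp
      refine ⟨⟨⟨by omega, by omega⟩, ⟨by omega, by omega⟩⟩, ?_⟩
      have h1 : (nx - a) * ny = nx*ny - a*ny := by rw [Nat.sub_mul]
      have h2 : (ny - b) * nx = ny*nx - b*nx := by rw [Nat.sub_mul]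
      have h3 : ny*nx = nx*ny := Nat.mul_comm _ _
      have ha : a*ny ≤ nx*ny := Nat.mul_le_mul_right _ (le_of_lt ha2)
      have hb : b*nx ≤ ny*nx := Nat.mul_le_mul_right _ (le_of_lt hb2)
      omega
    · rintro ⟨a,b⟩ hp
      simp only [Finset.mem_filter, hG, Finset.mem_product, Finset.mem_Ico] at hp
      obtain ⟨⟨⟨ha1,ha2⟩,⟨hb1,hb2⟩⟩, _⟩ := hp
      simp only [Prod.mk.injEq]
      constructor <;> omega
    · rintro ⟨a,b⟩ hp
      simp only [Finset.mem_filter, hG, Finset.mem_product, Finset.mem_Ico] at hp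
      obtain ⟨⟨⟨ha1,ha2⟩,⟨hb1,hb2⟩⟩, _⟩ := hp
      simp only [Prod.mk.injEq]
      constructor <;> omega
  have htot : (G.filter (fun p => p.1 * ny + p.2 * nx < nx * ny)).card
      + (G.filter (fun p => ¬ p.1 * ny + p.2 * nx < nx * ny)).card = G.card :=
    Finset.card_filter_add_card_filter_not _
  have hGcard : G.card = (nx - 1) * (ny - 1) := by
    simp [hG, Finset.card_product, Nat.card_Ico]
  rw [hsplit, hGcard] at htot
  omega


/-- A Lissajous arc with coprime frequencies `nx`, `ny` has exactly
`(nx − 1)(ny − 1)/2` double points. -/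
theorem lissajous_arc_crossing_count
    (nx ny : ℕ) (hnx : 0 < nx) (hny : 0 < ny) (hcop : Nat.Coprime nx ny)
    (S : Set (ℝ × ℝ))
    (hS : S = {p : ℝ × ℝ | 0 ≤ p.1 ∧ p.1 < p.2 ∧ p.2 ≤ π ∧
      Real.cos (nx * p.1) = Real.cos (nx * p.2) ∧
      Real.cos (ny * p.1) = Real.cos (ny * p.2)}) :
    S.Finite ∧ 2 * S.ncard = (nx - 1) * (ny - 1) := by
  classical
  have hpi := Real.pi_pos
  have hxne : (nx:ℝ) ≠ 0 := Nat.cast_ne_zero.mpr hnx.ne'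
  have hyne : (ny:ℝ) ≠ 0 := Nat.cast_ne_zero.mpr hny.ne'
  have hxpos : (0:ℝ) < nx := Nat.cast_pos.mpr hnx
  have hypos : (0:ℝ) < ny := Nat.cast_pos.mpr hny
  set C : Finset (ℕ × ℕ) := (Finset.Ico 1 nx ×ˢ Finset.Ico 1 ny).filter
      (fun p => p.1 * ny + p.2 * nx < nx * ny) with hC
  set f : ℕ × ℕ → ℝ × ℝ := fun p =>
      (π * |(p.1:ℝ)/nx - (p.2:ℝ)/ny|, π * ((p.1:ℝ)/nx + (p.2:ℝ)/ny)) with hf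
  have hmemC : ∀ p : ℕ × ℕ, p ∈ C ↔
      1 ≤ p.1 ∧ p.1 < nx ∧ 1 ≤ p.2 ∧ p.2 < ny ∧ p.1 * ny + p.2 * nx < nx * ny := by
    rintro ⟨a, b⟩
    simp [hC, Finset.mem_filter, Finset.mem_product, Finset.mem_Ico]
    tauto
  have himg : S = f '' (C : Set (ℕ × ℕ)) := by
    rw [hS]
    ext ⟨t₁, t₂⟩
    simp only [Set.mem_setOf_eq, Set.mem_image, Finset.coe_sort_coe, Finset.mem_coe]
    constructor
    · rintro ⟨ht0, ht12, ht2, hcx, hcy⟩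
      rw [Real.cos_eq_cos_iff] at hcx hcy
      obtain ⟨k, hk | hk⟩ := hcx <;> obtain ⟨m, hm | hm⟩ := hcy
      · -- diff, diff : contradiction
        exfalso
        have h1 : (nx:ℝ) * (t₂ - t₁) = 2 * k * π := by linear_combination hk
        have h2 : (ny:ℝ) * (t₂ - t₁) = 2 * m * π := by linear_combination hm
        exact both_aux nx ny hnx hny hcop (t₂ - t₁) (by linarith) (by linarith) k m h1 h2
      · -- diff from nx, sum from ny
        have h1 : (nx:ℝ) * (t₂ - t₁) = 2 * k * π := by linear_combination hk
        have h2 : (ny:ℝ) * (t₂ + t₁) = 2 * m * π := by linear_combination hm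
        obtain ⟨a, b, ha1, ha2, hb1, hb2, hab, hle, he1, he2⟩ :=
          case_aux nx ny hnx hny hcop t₁ t₂ ht0 ht12 ht2 k m h1 h2
        refine ⟨(a, b), (hmemC (a,b)).mpr ⟨ha1, ha2, hb1, hb2, hab⟩, ?_⟩
        simp only [hf, Prod.mk.injEq]
        constructor
        · rw [abs_of_nonpos (by linarith)]
          linarith [he1]
        · linarith [he2]
      · -- sum from nx, diff from ny
        have h1 : (ny:ℝ) * (t₂ - t₁) = 2 * m * π := by linear_combination hm
        have h2 : (nx:ℝ) * (t₂ + t₁) = 2 * k * π := by linear_combination hk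
        obtain ⟨a, b, ha1, ha2, hb1, hb2, hab, hle, he1, he2⟩ :=
          case_aux ny nx hny hnx hcop.symm t₁ t₂ ht0 ht12 ht2 m k h1 h2
        refine ⟨(b, a), (hmemC (b,a)).mpr ⟨hb1, hb2, ha1, ha2, by
          show b * ny + a * nx < nx * ny
          rw [Nat.mul_comm nx ny]; omega⟩, ?_⟩
        simp only [hf, Prod.mk.injEq]
        constructor
        · rw [abs_of_nonneg (by linarith)]
          linarith [he1]
        · linarith [he2]
      · -- sum, sum : contradiction
        exfalso
        have h1 : (nx:ℝ) * (t₂ + t₁) = 2 * k * π := by linear_combination hk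
        have h2 : (ny:ℝ) * (t₂ + t₁) = 2 * m * π := by linear_combination hm
        exact both_aux nx ny hnx hny hcop (t₂ + t₁) (by linarith) (by linarith) k m h1 h2
    · rintro ⟨⟨a, b⟩, hab, heq⟩
      obtain ⟨ha1, ha2, hb1, hb2, habl⟩ := (hmemC (a,b)).mp hab
      have hapos : (0:ℝ) < (a:ℝ)/nx := by
        apply div_pos _ hxpos; exact_mod_cast ha1
      have hbpos : (0:ℝ) < (b:ℝ)/ny := by
        apply div_pos _ hypos; exact_mod_cast hb1
      have hsum1 : (a:ℝ)/nx + (b:ℝ)/ny < 1 := by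
        rw [div_add_div _ _ hxne hyne, div_lt_one (by positivity)]
        have : ((a*ny + b*nx : ℕ) : ℝ) < ((nx*ny : ℕ) : ℝ) := by exact_mod_cast habl
        push_cast at this
        linarith
      obtain ⟨e1, e2⟩ : (t₁ = π * |(a:ℝ)/nx - (b:ℝ)/ny|) ∧
          (t₂ = π * ((a:ℝ)/nx + (b:ℝ)/ny)) := by
        constructor
        · exact (congrArg Prod.fst heq).symm
        · exact (congrArg Prod.snd heq).symm
      refine ⟨by rw [e1]; positivity, ?_, ?_, ?_, ?_⟩
      · rw [e1, e2]
        apply mul_lt_mul_of_pos_left _ hpi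
        rw [abs_sub_lt_iff]
        constructor <;> linarith
      · rw [e2]
        nlinarith
      · -- cos nx equality
        rw [e1, e2]
        have harg1 : (nx:ℝ) * (π * |(a:ℝ)/nx - (b:ℝ)/ny|)
            = |(a:ℝ) * π - (nx:ℝ) * ((b:ℝ)/ny * π)| := by
          rw [show |(a:ℝ) * π - (nx:ℝ) * ((b:ℝ)/ny * π)|
              = |(nx:ℝ) * π| * |(a:ℝ)/nx - (b:ℝ)/ny| by
            rw [← abs_mul]; congr 1; field_simp]
          rw [abs_of_nonneg (by positivity : (0:ℝ) ≤ (nx:ℝ) * π)]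
          ring
        have harg2 : (nx:ℝ) * (π * ((a:ℝ)/nx + (b:ℝ)/ny))
            = (a:ℝ) * π + (nx:ℝ) * ((b:ℝ)/ny * π) := by
          field_simp
        rw [harg1, harg2, Real.cos_abs, cos_pi_aux]
      · -- cos ny equality
        rw [e1, e2]
        have harg1 : (ny:ℝ) * (π * |(a:ℝ)/nx - (b:ℝ)/ny|)
            = |(b:ℝ) * π - (ny:ℝ) * ((a:ℝ)/nx * π)| := by
          rw [show |(b:ℝ) * π - (ny:ℝ) * ((a:ℝ)/nx * π)|
              = |(ny:ℝ) * π| * |(b:ℝ)/ny - (a:ℝ)/nx| by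
            rw [← abs_mul]; congr 1; field_simp]
          rw [abs_of_nonneg (by positivity : (0:ℝ) ≤ (ny:ℝ) * π), abs_sub_comm]
          ring
        have harg2 : (ny:ℝ) * (π * ((a:ℝ)/nx + (b:ℝ)/ny))
            = (b:ℝ) * π + (ny:ℝ) * ((a:ℝ)/nx * π) := by
          field_simp; ring
        rw [harg1, harg2, Real.cos_abs, cos_pi_aux]
  have hinj : Set.InjOn f (C : Set (ℕ × ℕ)) := by
    rintro ⟨a, b⟩ ha ⟨a', b'⟩ hb heq
    obtain ⟨ha1, ha2, hb1, hb2, habl⟩ := (hmemC (a,b)).mp ha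
    obtain ⟨ha1', ha2', hb1', hb2', habl'⟩ := (hmemC (a',b')).mp hb
    simp only [hf, Prod.mk.injEq] at heq
    obtain ⟨q1, q2⟩ := heq
    have q1' : |(a:ℝ)/nx - (b:ℝ)/ny| = |(a':ℝ)/nx - (b':ℝ)/ny| :=
      mul_left_cancel₀ hpi.ne' q1
    have q2' : (a:ℝ)/nx + (b:ℝ)/ny = (a':ℝ)/nx + (b':ℝ)/ny :=
      mul_left_cancel₀ hpi.ne' q2
    rw [abs_eq_abs] at q1'
    rcases q1' with h | h
    · have hu : (a:ℝ)/nx = (a':ℝ)/nx := by linarith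
      have hv : (b:ℝ)/ny = (b':ℝ)/ny := by linarith
      have : (a:ℝ) = a' := by
        field_simp at hu; exact_mod_cast hu
      have hbb : (b:ℝ) = b' := by
        field_simp at hv; exact_mod_cast hv
      have : a = a' := by exact_mod_cast this
      have hbb' : b = b' := by exact_mod_cast hbb
      simp [this, hbb']
    · exfalso
      have hu : (a:ℝ)/nx = (b':ℝ)/ny := by linarith
      have : (a:ℝ) * ny = (b':ℝ) * nx := by
        field_simp at hu
        linarith
      have hn : a * ny = b' * nx := by exact_mod_cast this
      have hdvd : nx ∣ a * ny := ⟨b', by rw [hn, Nat.mul_comm]⟩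
      have := Nat.le_of_dvd (by omega) (Nat.Coprime.dvd_of_dvd_mul_right hcop hdvd)
      omega
  have hfin : S.Finite := by
    rw [himg]; exact (C.finite_toSet).image f
  refine ⟨hfin, ?_⟩
  rw [himg, Set.ncard_image_of_injOn hinj, Set.ncard_coe_finset]
  exact count_lemma nx ny hnx hny hcop
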